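/- Let α : ℝ → ℝ be strictly increasing with α(0) = 0, and let h : ℝ → ℝ be differentiable with h(0) ≥ 0 and h'(t) ≥ −α(h(t)) for all t ≥ 0. Then h(t) ≥ 0 for all t ≥ 0. -/
import Mathlib

/-- Scalar comparison principle behind the CBF condition: if `α` is strictly
increasing with `α(0) = 0`, `h` is differentiable, `h(0) ≥ 0`, and
`h'(t) ≥ −α(h(t))` for all `t ≥ 0`, then `h(t) ≥ 0` for all `t ≥ 0`. -/
theorem cbf_comparison (α : ℝ → ℝ) (hα : StrictMono α) (hα0 : α 0 = 0)
    (h : ℝ → ℝ) (hdiff : Differentiable ℝ h) (h0 : 0 ≤ h 0)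
    (hineq : ∀ t ≥ (0 : ℝ), -α (h t) ≤ deriv h t) :
    ∀ t ≥ (0 : ℝ), 0 ≤ h t := by
  intro t₁ ht₁
  by_contra hneg
  push_neg at hneg
  set S : Set ℝ := {t | t ∈ Set.Icc (0:ℝ) t₁ ∧ 0 ≤ h t} with hS
  have hne : S.Nonempty := ⟨0, ⟨le_refl 0, ht₁⟩, h0⟩
  have hbdd : BddAbove S := ⟨t₁, fun x hx => hx.1.2⟩
  set s := sSup S with hs
  have hsmem : s ∈ Set.Icc (0:ℝ) t₁ :=
    ⟨le_csSup hbdd ⟨⟨le_refl 0, ht₁⟩, h0⟩, csSup_le hne fun x hx => hx.1.2⟩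
  have hhs : 0 ≤ h s := by
    have h1 : s ∈ closure S := csSup_mem_closure hne hbdd
    have hcl : IsClosed {t | 0 ≤ h t} := isClosed_le continuous_const hdiff.continuous
    have h2 : s ∈ closure {t | 0 ≤ h t} := closure_mono (fun x hx => hx.2) h1
    rwa [hcl.closure_eq] at h2
  have hst : s < t₁ := lt_of_le_of_ne hsmem.2 (fun heq => by rw [heq] at hhs; linarith)
  have hneg' : ∀ t ∈ Set.Ioc s t₁, h t < 0 := by
    intro t ht
    by_contra hc
    push_neg at hc
    have hmem : t ∈ S := ⟨⟨le_trans hsmem.1 ht.1.le, ht.2⟩, hc⟩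
    exact absurd (le_csSup hbdd hmem) (not_le.2 ht.1)
  have hmono : MonotoneOn h (Set.Icc s t₁) := by
    apply monotoneOn_of_deriv_nonneg (convex_Icc s t₁) hdiff.continuous.continuousOn
      (fun x _ => hdiff.differentiableAt.differentiableWithinAt)
    intro x hx
    rw [interior_Icc] at hx
    have hx0 : (0:ℝ) ≤ x := le_trans hsmem.1 hx.1.le
    have hhx : h x < 0 := hneg' x ⟨hx.1, hx.2.le⟩
    have hαx : α (h x) < 0 := by rw [← hα0]; exact hα hhx
    linarith [hineq x hx0]
  have := hmono ⟨le_refl s, hst.le⟩ ⟨hst.le, le_refl t₁⟩ hst.le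
  linarith
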